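/- Let h > 0 be a real number, N ≥ 1 a natural number, and p ≥ 1 a real number. Let u : ℕ → ℝ satisfy u_k ≥ 0 and u_k ≤ u_{k+1} for all k. If for every k with 1 ≤ k ≤ N one has u_{k−1}^p·(u_k − u_{k−1})/h ≥ (p/(N·h)^{p−1})·u_k^p·(k·h)^{p−1}, then h·Σ_{k=1}^{N} u_k^{p+2} − (1/(N·h)^{p−1})·(h·Σ_{k=1}^{N} u_k)^{p+1} ≥ u_0^{p+1} · h·Σ_{k=1}^{N} u_k. -/

import Mathlib

open Real Finset

/-- `x ^ (q-1) * x = x ^ q` for `0 ≤ x`, `0 < q` (rpow). -/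
lemma qi_rpow_pred_mul (x q : ℝ) (hx : 0 ≤ x) (hq : 0 < q) :
    x ^ (q - 1) * x = x ^ q := by
  rcases eq_or_lt_of_le hx with h0 | h0
  · simp [← h0, Real.zero_rpow hq.ne']
  · rw [← Real.rpow_add_one h0.ne' (q - 1)]
    ring_nf

/-- Convexity upper bound: `b^q - a^q ≤ q * b^(q-1) * (b-a)`. -/
lemma qi_conv_upper (a b q : ℝ) (ha : 0 ≤ a) (hab : a ≤ b) (hq : 1 ≤ q) :
    b ^ q - a ^ q ≤ q * b ^ (q - 1) * (b - a) := by
  rcases eq_or_lt_of_le (ha.trans hab) with h0 | hb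
  · have ha0 : a = 0 := le_antisymm (hab.trans_eq h0.symm) ha
    have hq0 : q ≠ 0 := by linarith
    simp [ha0, ← h0, Real.zero_rpow hq0]
  · have ht0 : 0 ≤ a / b := div_nonneg ha hb.le
    have ht1 : a / b ≤ 1 := (div_le_one hb).mpr hab
    have hs : (-1 : ℝ) ≤ a / b - 1 := by linarith
    have hB := one_add_mul_self_le_rpow_one_add hs hq
    rw [show (1 + (a / b - 1)) = a / b by ring] at hB
    have hat : b * (a / b) = a := by field_simp
    have haq : a ^ q = b ^ q * (a / b) ^ q := by
      rw [← Real.mul_rpow hb.le ht0, hat]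
    have hbq : b ^ q = b ^ (q - 1) * b := (qi_rpow_pred_mul b q hb.le (by linarith)).symm
    have hmul := mul_le_mul_of_nonneg_left hB (Real.rpow_nonneg hb.le q)
    have key : b ^ q * (1 + q * (a / b - 1)) ≤ a ^ q := by
      rw [haq]; exact hmul
    have e1 : b ^ q * q * (1 - a / b) = q * b ^ (q - 1) * (b - a) := by
      rw [hbq]; field_simp
    nlinarith [key, e1]

/-- Convexity lower bound: `q * a^(q-1) * (b-a) ≤ b^q - a^q` for `1 < q`. -/
lemma qi_conv_lower (a b q : ℝ) (ha : 0 ≤ a) (hab : a ≤ b) (hq : 1 < q) :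
    q * a ^ (q - 1) * (b - a) ≤ b ^ q - a ^ q := by
  rcases eq_or_lt_of_le ha with h0 | ha0
  · have : a = 0 := h0.symm
    subst this
    have h1 : (0 : ℝ) ^ (q - 1) = 0 := Real.zero_rpow (by linarith)
    have h2 : (0 : ℝ) ^ q = 0 := Real.zero_rpow (by linarith)
    simp [h1, h2, Real.rpow_nonneg (ha.trans hab) q]
  · have ht1 : 1 ≤ b / a := (one_le_div ha0).mpr hab
    have hs : (-1 : ℝ) ≤ b / a - 1 := by linarith
    have hB := one_add_mul_self_le_rpow_one_add hs hq.le
    rw [show (1 + (b / a - 1)) = b / a by ring] at hB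
    have hat : a * (b / a) = b := by field_simp
    have hbq : b ^ q = a ^ q * (b / a) ^ q := by
      rw [← Real.mul_rpow ha0.le (by linarith : (0:ℝ) ≤ b / a), hat]
    have haq : a ^ q = a ^ (q - 1) * a := (qi_rpow_pred_mul a q ha0.le (by linarith)).symm
    have hmul := mul_le_mul_of_nonneg_left hB (Real.rpow_nonneg ha0.le q)
    have key : a ^ q * (1 + q * (b / a - 1)) ≤ b ^ q := by
      rw [hbq]; exact hmul
    have e1 : a ^ q * q * (b / a - 1) = q * a ^ (q - 1) * (b - a) := by
      rw [haq]; field_simp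
    nlinarith [key, e1]

theorem qi_nabla_hZ_thm37
    (h : ℝ) (hh : 0 < h) (N : ℕ) (hN : 1 ≤ N) (p : ℝ) (hp : 1 ≤ p)
    (u : ℕ → ℝ)
    (hnonneg : ∀ k, 0 ≤ u k)
    (hmono : ∀ k, u k ≤ u (k + 1))
    (hyp : ∀ k, 1 ≤ k → k ≤ N →
      (p / ((N : ℝ) * h) ^ (p - 1)) * u k ^ p * ((k : ℝ) * h) ^ (p - 1) ≤
        u (k - 1) ^ p * (u k - u (k - 1)) / h) :
    h * ∑ k ∈ Finset.Icc 1 N, u k ^ (p + 2) -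
        (1 / ((N : ℝ) * h) ^ (p - 1)) *
          (h * ∑ k ∈ Finset.Icc 1 N, u k) ^ (p + 1) ≥
      u 0 ^ (p + 1) * (h * ∑ k ∈ Finset.Icc 1 N, u k) := by
  have hN0 : (0 : ℝ) < (N : ℝ) := by exact_mod_cast hN
  have hNh : 0 < (N : ℝ) * h := mul_pos hN0 hh
  set C : ℝ := ((N : ℝ) * h) ^ (p - 1) with hCdef
  have hC : 0 < C := Real.rpow_pos_of_pos hNh _
  have hm : Monotone u := monotone_nat_of_le_succ hmono
  have hSnonneg : ∀ n : ℕ, 0 ≤ h * ∑ k ∈ Finset.Icc 1 n, u k := fun n =>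
    mul_nonneg hh.le (Finset.sum_nonneg fun k _ => hnonneg k)
  have hSsucc : ∀ n : ℕ, h * ∑ k ∈ Finset.Icc 1 (n + 1), u k
      = h * ∑ k ∈ Finset.Icc 1 n, u k + h * u (n + 1) := by
    intro n
    rw [Finset.sum_Icc_succ_top (Nat.le_add_left 1 n)]
    ring
  have hSle : ∀ n : ℕ, h * ∑ k ∈ Finset.Icc 1 n, u k ≤ (n : ℝ) * h * u n := by
    intro n
    have : ∑ k ∈ Finset.Icc 1 n, u k ≤ ∑ _k ∈ Finset.Icc 1 n, u n :=
      Finset.sum_le_sum fun k hk => hm (Finset.mem_Icc.mp hk).2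
    have hcard : ∑ _k ∈ Finset.Icc 1 n, u n = (n : ℝ) * u n := by
      rw [Finset.sum_const, Nat.card_Icc]
      simp [nsmul_eq_mul]
    have h3 := mul_le_mul_of_nonneg_left (this.trans_eq hcard) hh.le
    linarith [h3]
  -- key auxiliary inequality
  have hQ : ∀ n : ℕ, n ≤ N →
      u 0 ^ (p + 1) + (p + 1) * (h * ∑ k ∈ Finset.Icc 1 n, u k) ^ p * C⁻¹
        ≤ u n ^ (p + 1) := by
    intro n
    induction n with
    | zero =>
      intro _
      simp [Real.zero_rpow (by linarith : p ≠ 0)]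
    | succ n ih =>
      intro hn1
      have ihn := ih (Nat.le_of_succ_le hn1)
      set Sn := h * ∑ k ∈ Finset.Icc 1 n, u k with hSn
      set Sm := h * ∑ k ∈ Finset.Icc 1 (n + 1), u k with hSm
      have hstep : Sm = Sn + h * u (n + 1) := hSsucc n
      have hSmono : Sn ≤ Sm := by
        have := mul_nonneg hh.le (hnonneg (n + 1))
        linarith [hstep.le, hstep.ge]
      -- hypothesis at k = n+1
      have hy := hyp (n + 1) (Nat.le_add_left 1 n) hn1
      simp only [Nat.add_sub_cancel] at hy
      have hy' : p * C⁻¹ * u (n + 1) ^ p * ((↑(n + 1) : ℝ) * h) ^ (p - 1) * h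
          ≤ u n ^ p * (u (n + 1) - u n) := by
        have := mul_le_mul_of_nonneg_right hy hh.le
        rw [div_mul_cancel₀ _ hh.ne'] at this
        rwa [div_eq_mul_inv] at this
      -- convexity lower bound on u
      have A1 := qi_conv_lower (u n) (u (n + 1)) (p + 1) (hnonneg n) (hmono n)
        (by linarith)
      rw [show p + 1 - 1 = p by ring] at A1
      -- convexity upper bound on S
      have A2 := qi_conv_upper Sn Sm p (hSnonneg n) hSmono hp
      -- bound Sm^(p-1)
      have A3 : Sm ^ (p - 1) ≤ ((↑(n + 1) : ℝ) * h) ^ (p - 1) * u (n + 1) ^ (p - 1) := by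
        have h1 : Sm ≤ (↑(n + 1) : ℝ) * h * u (n + 1) := hSle (n + 1)
        have h2 := Real.rpow_le_rpow (hSnonneg (n + 1)) h1 (by linarith : 0 ≤ p - 1)
        rwa [Real.mul_rpow (by positivity) (hnonneg (n + 1))] at h2
      have A4 : u (n + 1) ^ (p - 1) * u (n + 1) = u (n + 1) ^ p :=
        qi_rpow_pred_mul (u (n + 1)) p (hnonneg (n + 1)) (by linarith)
      -- combine: Sm^p - Sn^p ≤ p * W * u(n+1)^p * h  where W = ((n+1)h)^(p-1)
      have A5 : Sm ^ p - Sn ^ p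
          ≤ p * ((↑(n + 1) : ℝ) * h) ^ (p - 1) * u (n + 1) ^ p * h := by
        have e1 : Sm - Sn = h * u (n + 1) := by rw [hstep]; ring
        calc Sm ^ p - Sn ^ p ≤ p * Sm ^ (p - 1) * (Sm - Sn) := A2
          _ = p * Sm ^ (p - 1) * (h * u (n + 1)) := by rw [e1]
          _ ≤ p * (((↑(n + 1) : ℝ) * h) ^ (p - 1) * u (n + 1) ^ (p - 1))
              * (h * u (n + 1)) := by
            have hp0 : (0 : ℝ) ≤ p := by linarith
            have h6 := mul_le_mul_of_nonneg_left (mul_le_mul_of_nonneg_right A3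
              (mul_nonneg hh.le (hnonneg (n + 1)))) hp0
            linarith [h6]
          _ = p * ((↑(n + 1) : ℝ) * h) ^ (p - 1)
              * (u (n + 1) ^ (p - 1) * u (n + 1)) * h := by ring
          _ = p * ((↑(n + 1) : ℝ) * h) ^ (p - 1) * u (n + 1) ^ p * h := by rw [A4]
      have A6 : (Sm ^ p - Sn ^ p) * C⁻¹
          ≤ (p * ((↑(n + 1) : ℝ) * h) ^ (p - 1) * u (n + 1) ^ p * h) * C⁻¹ :=
        mul_le_mul_of_nonneg_right A5 (inv_nonneg.mpr hC.le)
      have A7 : (p * ((↑(n + 1) : ℝ) * h) ^ (p - 1) * u (n + 1) ^ p * h) * C⁻¹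
          = p * C⁻¹ * u (n + 1) ^ p * ((↑(n + 1) : ℝ) * h) ^ (p - 1) * h := by
        ring
      have A8 : (Sm ^ p - Sn ^ p) * C⁻¹ ≤ u n ^ p * (u (n + 1) - u n) :=
        le_trans (A6.trans_eq A7) hy'
      have A9 := mul_le_mul_of_nonneg_left A8 (by linarith : (0 : ℝ) ≤ p + 1)
      -- A9 : (p+1) * ((Sm^p - Sn^p)/C) ≤ (p+1) * (u n^p * (u (n+1) - u n))
      have hfin : (p + 1) * ((Sm ^ p - Sn ^ p) * C⁻¹)
          ≤ u (n + 1) ^ (p + 1) - u n ^ (p + 1) := by linarith [A9, A1]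
      have e2 : (p + 1) * Sm ^ p * C⁻¹ - (p + 1) * Sn ^ p * C⁻¹
          = (p + 1) * ((Sm ^ p - Sn ^ p) * C⁻¹) := by ring
      linarith [ihn, hfin, e2.ge, e2.le]
  -- main induction
  have hP : ∀ n : ℕ, n ≤ N →
      u 0 ^ (p + 1) * (h * ∑ k ∈ Finset.Icc 1 n, u k)
        + (h * ∑ k ∈ Finset.Icc 1 n, u k) ^ (p + 1) * C⁻¹
        ≤ h * ∑ k ∈ Finset.Icc 1 n, u k ^ (p + 2) := by
    intro n
    induction n with
    | zero =>
      intro _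
      simp [Real.zero_rpow (by linarith : p + 1 ≠ 0)]
    | succ n ih =>
      intro hn1
      have ihn := ih (Nat.le_of_succ_le hn1)
      set Sn := h * ∑ k ∈ Finset.Icc 1 n, u k with hSn
      set Sm := h * ∑ k ∈ Finset.Icc 1 (n + 1), u k with hSm
      have hstep : Sm = Sn + h * u (n + 1) := hSsucc n
      have hSmono : Sn ≤ Sm := by
        have := mul_nonneg hh.le (hnonneg (n + 1))
        linarith [hstep.le, hstep.ge]
      have hTstep : h * ∑ k ∈ Finset.Icc 1 (n + 1), u k ^ (p + 2)
          = h * ∑ k ∈ Finset.Icc 1 n, u k ^ (p + 2) + h * u (n + 1) ^ (p + 2) := by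
        rw [Finset.sum_Icc_succ_top (Nat.le_add_left 1 n)]
        ring
      have B1 := qi_conv_upper Sn Sm (p + 1) (hSnonneg n) hSmono (by linarith)
      rw [show p + 1 - 1 = p by ring] at B1
      have e1 : Sm - Sn = h * u (n + 1) := by rw [hstep]; ring
      rw [e1] at B1
      -- B1 : Sm^(p+1) - Sn^(p+1) ≤ (p+1) * Sm^p * (h * u (n+1))
      have B2 : (Sm ^ (p + 1) - Sn ^ (p + 1)) * C⁻¹
          ≤ ((p + 1) * Sm ^ p * (h * u (n + 1))) * C⁻¹ :=
        mul_le_mul_of_nonneg_right B1 (inv_nonneg.mpr hC.le)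
      have hq := hQ (n + 1) hn1
      rw [← hSm] at hq
      have B3 := mul_le_mul_of_nonneg_left hq
        (mul_nonneg hh.le (hnonneg (n + 1)))
      -- B3 : h*u(n+1) * (u0^(p+1) + (p+1)*Sm^p/C) ≤ h*u(n+1) * u(n+1)^(p+1)
      have B4 : u (n + 1) ^ (p + 1) * u (n + 1) = u (n + 1) ^ (p + 2) := by
        have := qi_rpow_pred_mul (u (n + 1)) (p + 2) (hnonneg (n + 1)) (by linarith)
        rwa [show p + 2 - 1 = p + 1 by ring] at this
      rw [hTstep, hstep]
      have e2 : (Sn + h * u (n + 1)) ^ (p + 1) * C⁻¹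
          = Sn ^ (p + 1) * C⁻¹ + (Sm ^ (p + 1) - Sn ^ (p + 1)) * C⁻¹ := by
        rw [hstep]; ring
      rw [e2]
      have e4 : h * (u (n + 1) ^ (p + 1) * u (n + 1)) = h * u (n + 1) ^ (p + 2) := by
        rw [B4]
      clear_value Sn Sm
      linarith [ihn, B2, B3, e4.le, e4.ge]
  have := hP N le_rfl
  have e3 : (1 / C) * (h * ∑ k ∈ Finset.Icc 1 N, u k) ^ (p + 1)
      = (h * ∑ k ∈ Finset.Icc 1 N, u k) ^ (p + 1) * C⁻¹ := by ring
  linarith [this, e3.le, e3.ge]
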